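/- If T ∈ B_{A^{1/2}}(H), then both the A-spectrum σ_A(T) and the A-approximate point spectrum σ_{A,app}(T) are compact subsets of ℂ. -/

import Mathlib

open Filter Topology ContinuousLinearMap

set_option maxHeartbeats 1000000
set_option synthInstance.maxHeartbeats 1000000
set_option linter.unusedSectionVars false

variable {H : Type*} [NormedAddCommGroup H] [InnerProductSpace ℂ H] [CompleteSpace H]

/-- The `A`-seminorm `‖x‖_A = ⟨Ax,x⟩^{1/2}`. -/
noncomputable def anorm (A : H →L[ℂ] H) (x : H) : ℝ :=
  Real.sqrt (inner ℂ (A x) x : ℂ).re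

/-- `B_{A^{1/2}}(H)`: the `A`-bounded operators. -/
def MemBAhalf (A T : H →L[ℂ] H) : Prop :=
  ∃ d > 0, ∀ ξ : H, anorm A (T ξ) ≤ d * anorm A ξ

/-- `B_A(H)`: operators admitting an `A`-adjoint. -/
def MemBA (A T : H →L[ℂ] H) : Prop :=
  Set.range (fun x => ContinuousLinearMap.adjoint T (A x)) ⊆ Set.range A

/-- A-invertibility in `B_{A^{1/2}}(H)`. -/
def AInvertibleHalf (A T : H →L[ℂ] H) : Prop :=
  ∃ S : H →L[ℂ] H, S ≠ 0 ∧ MemBAhalf A S ∧ A ∘L T ∘L S = A ∧ A ∘L S ∘L T = A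

/-- A-invertibility in `B_A(H)`. -/
def AInvertibleBA (A T : H →L[ℂ] H) : Prop :=
  ∃ S : H →L[ℂ] H, S ≠ 0 ∧ MemBA A S ∧ A ∘L T ∘L S = A ∧ A ∘L S ∘L T = A

/-- The `A`-approximate point spectrum. -/
def sigmaAapp (A T : H →L[ℂ] H) : Set ℂ :=
  {lam | ∃ x : ℕ → H, (∀ n, anorm A (x n) = 1) ∧
    Tendsto (fun n => anorm A (T (x n) - lam • x n)) atTop (nhds 0)}

/-- The `A`-spectrum. -/
def sigmaA (A T : H →L[ℂ] H) : Set ℂ :=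
  {lam | ¬ AInvertibleHalf A (lam • (1 : H →L[ℂ] H) - T)}

/-- The `A`-numerical range. -/
def WA (A T : H →L[ℂ] H) : Set ℂ :=
  {z | ∃ x : H, anorm A x = 1 ∧ z = (inner ℂ (A (T x)) x : ℂ)}

/-- The `A`-operator seminorm, sup over the closure of the range of `A`. -/
noncomputable def AopnormCl (A T : H →L[ℂ] H) : ℝ :=
  sSup {r | ∃ ξ ∈ closure (Set.range A), anorm A ξ ≤ 1 ∧ r = anorm A (T ξ)}

/-- The `A`-operator seminorm, sup over all vectors of `A`-seminorm at most one. -/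
noncomputable def Aopnorm (A T : H →L[ℂ] H) : ℝ :=
  sSup {r | ∃ ξ : H, anorm A ξ ≤ 1 ∧ r = anorm A (T ξ)}

/-- The `A`-numerical radius. -/
noncomputable def wA (A T : H →L[ℂ] H) : ℝ :=
  sSup {r | ∃ x : H, anorm A x = 1 ∧ r = ‖(inner ℂ (A (T x)) x : ℂ)‖}

/-- The `A`-reduced minimum modulus. -/
noncomputable def gammaA (A T : H →L[ℂ] H) : ℝ :=
  sInf {r | ∃ ξ : H, (∀ y : H, anorm A (T y) = 0 → (inner ℂ (A ξ) y : ℂ) = 0) ∧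
    anorm A ξ = 1 ∧ r = anorm A (T ξ)}

/-- closure of the range of `A` as a submodule. -/
noncomputable def rangeClosure (A : H →L[ℂ] H) : Submodule ℂ H :=
  (LinearMap.range (A : H →ₗ[ℂ] H)).topologicalClosure

noncomputable instance (A : H →L[ℂ] H) : CompleteSpace (rangeClosure A) :=
  (Submodule.isClosed_topologicalClosure _).completeSpace_coe

/-- orthogonal projection onto the closure of the range of `A`, as an operator on `H`. -/
noncomputable def Pcl (A : H →L[ℂ] H) : H →L[ℂ] H :=
  (rangeClosure A).subtypeL ∘L (rangeClosure A).orthogonalProjection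




-- ### Auxiliary development ###

noncomputable def Rop (A : H →L[ℂ] H) : H →L[ℂ] H := CFC.sqrt A

lemma Rop_mul (A : H →L[ℂ] H) (hA : A.IsPositive) : Rop A * Rop A = A := by
  have := CFC.sq_sqrt A ((ContinuousLinearMap.nonneg_iff_isPositive A).2 hA)
  rwa [sq] at this

lemma Rop_sa (A : H →L[ℂ] H) : IsSelfAdjoint (Rop A) :=
  (((ContinuousLinearMap.nonneg_iff_isPositive _).1 (CFC.sqrt_nonneg (a := A)))).isSelfAdjoint

lemma Rop_apply_apply (A : H →L[ℂ] H) (hA : A.IsPositive) (x : H) :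
    Rop A (Rop A x) = A x := by
  conv_rhs => rw [← Rop_mul A hA]
  rfl

lemma anorm_eq (A : H →L[ℂ] H) (hA : A.IsPositive) (x : H) :
    anorm A x = ‖Rop A x‖ := by
  unfold anorm
  rw [← Rop_apply_apply A hA x]
  have h1 : (inner ℂ (Rop A (Rop A x)) x : ℂ) = inner ℂ (Rop A x) (Rop A x) := by
    have h0 := ContinuousLinearMap.adjoint_inner_left (Rop A) x (Rop A x)
    rw [(Rop_sa (A := A)).adjoint_eq] at h0
    exact h0
  rw [h1]
  have h2 : (inner ℂ (Rop A x) (Rop A x) : ℂ).re = ‖Rop A x‖ ^ 2 := by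
    rw [← inner_self_eq_norm_sq (𝕜 := ℂ)]; rfl
  rw [h2]
  exact Real.sqrt_sq (norm_nonneg _)

lemma Rop_eq_zero_iff (A : H →L[ℂ] H) (hA : A.IsPositive) (x : H) :
    Rop A x = 0 ↔ A x = 0 := by
  constructor
  · intro h; rw [← Rop_apply_apply A hA x, h, map_zero]
  · intro h
    have h2 : anorm A x = 0 := by unfold anorm; rw [h]; simp
    rw [anorm_eq A hA] at h2
    exact norm_eq_zero.1 h2

lemma inner_A_self (A : H →L[ℂ] H) (hA : A.IsPositive) (x y : H) :
    (inner ℂ (A x) y : ℂ) = inner ℂ x (A y) := by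
  have h0 := ContinuousLinearMap.adjoint_inner_left A y x
  rw [hA.isSelfAdjoint.adjoint_eq] at h0
  exact h0

/-- the orthogonal complement of the closed range is inside the kernel. -/
lemma mem_ortho_imp_ker (A : H →L[ℂ] H) (hA : A.IsPositive) (y : H)
    (hy : y ∈ (rangeClosure A)ᗮ) : A y = 0 := by
  have h1 : ∀ x : H, (inner ℂ (A x) y : ℂ) = 0 := by
    intro x
    exact hy (A x) (Submodule.le_topologicalClosure _ ⟨x, rfl⟩)
  have h2 : (inner ℂ (A y) (A y) : ℂ) = 0 := by
    have h3 := h1 (A y)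
    rwa [inner_A_self A hA (A y) y] at h3
  exact inner_self_eq_zero.1 h2

/-- A ∘ P = A pointwise. -/
lemma A_P (A : H →L[ℂ] H) (hA : A.IsPositive) (x : H) : A (Pcl A x) = A x := by
  have h1 : x - Pcl A x ∈ (rangeClosure A)ᗮ :=
    Submodule.sub_starProjection_mem_orthogonal (K := rangeClosure A) x
  have h2 := mem_ortho_imp_ker A hA _ h1
  rw [map_sub] at h2
  rw [sub_eq_zero] at h2
  exact h2.symm

/-- ker A is orthogonal to the closed range, so P kills it. -/
lemma P_ker (A : H →L[ℂ] H) (hA : A.IsPositive) (x : H) (hx : A x = 0) :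
    Pcl A x = 0 := by
  have hxK : x ∈ (LinearMap.range (A : H →ₗ[ℂ] H))ᗮ := by
    rw [Submodule.mem_orthogonal]
    rintro u ⟨w, rfl⟩
    show (inner ℂ (A w) x : ℂ) = 0
    rw [inner_A_self A hA w x, hx, inner_zero_right]
  have h1 : x ∈ (rangeClosure A)ᗮ := by
    rw [rangeClosure, ← Submodule.orthogonal_orthogonal_eq_closure]
    exact Submodule.le_orthogonal_orthogonal _ hxK
  have h2 : (rangeClosure A).orthogonalProjectionOnto x = 0 :=
    Submodule.orthogonalProjectionOnto_apply_of_mem_orthogonal h1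
  show ((rangeClosure A).subtypeL ((rangeClosure A).orthogonalProjectionOnto x) : H) = 0
  rw [h2]; rfl

lemma P_fix (A : H →L[ℂ] H) (x : H) (hx : x ∈ rangeClosure A) : Pcl A x = x := by
  show (((rangeClosure A).orthogonalProjectionOnto x : rangeClosure A) : H) = x
  rw [Submodule.orthogonalProjectionOnto_mem_subspace_eq_self ⟨x, hx⟩]

lemma P_idem (A : H →L[ℂ] H) (x : H) : Pcl A (Pcl A x) = Pcl A x :=
  P_fix A _ (Submodule.coe_mem ((rangeClosure A).orthogonalProjectionOnto x))

lemma anorm_nonneg (A : H →L[ℂ] H) (x : H) : 0 ≤ anorm A x := Real.sqrt_nonneg _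

/-- ker preservation for A-bounded operators. -/
lemma ker_pres (A S : H →L[ℂ] H) (hA : A.IsPositive) (hS : MemBAhalf A S)
    (x : H) (hx : A x = 0) : A (S x) = 0 := by
  obtain ⟨d, hd, hb⟩ := hS
  have h1 : anorm A x = 0 := by
    rw [anorm_eq A hA, (Rop_eq_zero_iff A hA x).2 hx, norm_zero]
  have h2 : anorm A (S x) = 0 :=
    le_antisymm (by simpa [h1] using hb x) (anorm_nonneg A _)
  rw [anorm_eq A hA] at h2
  exact (Rop_eq_zero_iff A hA _).1 (norm_eq_zero.1 h2)

lemma Rop_P (A : H →L[ℂ] H) (hA : A.IsPositive) (x : H) :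
    Rop A (Pcl A x) = Rop A x := by
  have h1 : A (Pcl A x - x) = 0 := by rw [map_sub, A_P A hA, sub_self]
  have h2 := (Rop_eq_zero_iff A hA _).2 h1
  rw [map_sub, sub_eq_zero] at h2
  exact h2

lemma anorm_P (A : H →L[ℂ] H) (hA : A.IsPositive) (x : H) :
    anorm A (Pcl A x) = anorm A x := by
  rw [anorm_eq A hA, anorm_eq A hA, Rop_P A hA]

lemma exists_unit_anorm (A : H →L[ℂ] H) (hA : A.IsPositive) (hA0 : A ≠ 0) :
    ∃ x : H, anorm A x = 1 := by
  have h1 : ∃ ξ : H, A ξ ≠ 0 := by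
    by_contra h
    push_neg at h
    exact hA0 (ContinuousLinearMap.ext fun ξ => by rw [h ξ]; rfl)
  obtain ⟨ξ, hξ⟩ := h1
  have h2 : Rop A ξ ≠ 0 := fun h => hξ ((Rop_eq_zero_iff A hA ξ).1 h)
  have h3 : ‖Rop A ξ‖ > 0 := norm_pos_iff.2 h2
  refine ⟨((‖Rop A ξ‖ : ℂ)⁻¹) • ξ, ?_⟩
  rw [anorm_eq A hA, map_smul, norm_smul]
  simp [h3.ne']

lemma anorm_smul (A : H →L[ℂ] H) (hA : A.IsPositive) (a : ℂ) (x : H) :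
    anorm A (a • x) = ‖a‖ * anorm A x := by
  rw [anorm_eq A hA, anorm_eq A hA, map_smul, norm_smul]

lemma ker_pres_pow (A Y : H →L[ℂ] H) (hY : ∀ x, A x = 0 → A (Y x) = 0) :
    ∀ n : ℕ, ∀ x, A x = 0 → A ((Y ^ n) x) = 0 := by
  intro n
  induction n with
  | zero => intro x hx; simpa using hx
  | succ n ih =>
    intro x hx
    rw [pow_succ, ContinuousLinearMap.mul_apply]
    exact ih _ (hY x hx)

lemma opnorm_pow_le (s : H →L[ℂ] H) : ∀ n : ℕ, ‖s ^ n‖ ≤ ‖s‖ ^ n := by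
  intro n
  cases n with
  | zero =>
    simpa [ContinuousLinearMap.one_def] using ContinuousLinearMap.norm_id_le (E := H)
  | succ n => exact norm_pow_le' s (Nat.succ_pos n)

lemma abound_pow (A s : H →L[ℂ] H) (c : ℝ) (hc : 0 ≤ c)
    (hb : ∀ ξ, anorm A (s ξ) ≤ c * anorm A ξ) :
    ∀ n : ℕ, ∀ ξ, anorm A ((s ^ n) ξ) ≤ c ^ n * anorm A ξ := by
  intro n
  induction n with
  | zero => intro ξ; simp [ContinuousLinearMap.one_apply]
  | succ n ih =>
    intro ξ
    have h1 : (s ^ (n + 1)) ξ = (s ^ n) (s ξ) := by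
      rw [pow_succ, ContinuousLinearMap.mul_apply]
    rw [h1]
    calc anorm A ((s ^ n) (s ξ)) ≤ c ^ n * anorm A (s ξ) := ih (s ξ)
      _ ≤ c ^ n * (c * anorm A ξ) := by
          exact mul_le_mul_of_nonneg_left (hb ξ) (pow_nonneg hc n)
      _ = c ^ (n + 1) * anorm A ξ := by ring

lemma abound_tsum (A : H →L[ℂ] H) (hA : A.IsPositive) (f : ℕ → H →L[ℂ] H) (g : ℕ → ℝ)
    (hf : Summable f) (hg : Summable g)
    (hb : ∀ n ξ, anorm A ((f n) ξ) ≤ g n * anorm A ξ) :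
    ∀ ξ, anorm A ((∑' n, f n) ξ) ≤ (∑' n, g n) * anorm A ξ := by
  intro ξ
  have h1 : (∑' n, f n) ξ = ∑' n, (f n) ξ := by
    exact (ContinuousLinearMap.apply ℂ H ξ).map_tsum hf
  have hfs : Summable (fun n => (f n) ξ) :=
    hf.map (ContinuousLinearMap.apply ℂ H ξ) (ContinuousLinearMap.apply ℂ H ξ).continuous
  have h2 : Rop A ((∑' n, (f n) ξ)) = ∑' n, Rop A ((f n) ξ) := (Rop A).map_tsum hfs
  have hns : Summable (fun n => ‖Rop A ((f n) ξ)‖) := by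
    apply Summable.of_nonneg_of_le (fun n => norm_nonneg _) (fun n => ?_)
      (hg.mul_right (anorm A ξ))
    rw [← anorm_eq A hA]
    exact hb n ξ
  rw [anorm_eq A hA, h1, h2]
  calc ‖∑' n, Rop A ((f n) ξ)‖ ≤ ∑' n, ‖Rop A ((f n) ξ)‖ := norm_tsum_le_tsum_norm hns
    _ ≤ ∑' n, g n * anorm A ξ := by
        apply Summable.tsum_le_tsum _ hns (hg.mul_right (anorm A ξ))
        intro n
        rw [← anorm_eq A hA]
        exact hb n ξ
    _ = (∑' n, g n) * anorm A ξ := tsum_mul_right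

lemma tsum_telescope_op (u : ℕ → H →L[ℂ] H) (hu : Tendsto u atTop (nhds 0))
    (hsum : Summable (fun n => u n - u (n + 1))) :
    ∑' n, (u n - u (n + 1)) = u 0 := by
  apply HasSum.tsum_eq
  rw [Summable.hasSum_iff_tendsto_nat hsum]
  have h1 : ∀ n : ℕ, ∑ i ∈ Finset.range n, (u i - u (i + 1)) = u 0 - u n := by
    intro n
    rw [Finset.sum_range_sub' u n]
  simp_rw [h1]
  have := (tendsto_const_nhds (x := u 0) (f := atTop (α := ℕ))).sub hu
  simpa using this

lemma resolvent_open (A T : H →L[ℂ] H) (hA : A.IsPositive) (hA0 : A ≠ 0)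
    (hT : MemBAhalf A T) (lam0 : ℂ)
    (h : AInvertibleHalf A (lam0 • (1 : H →L[ℂ] H) - T)) :
    ∃ ε > 0, ∀ lam : ℂ, ‖lam - lam0‖ < ε →
      AInvertibleHalf A (lam • (1 : H →L[ℂ] H) - T) := by
  classical
  obtain ⟨S₀, hS0ne, hS0mem, h1, h2⟩ := h
  obtain ⟨c, hc, hcb⟩ := hS0mem
  set B : H →L[ℂ] H := lam0 • (1 : H →L[ℂ] H) - T with hBdef
  set P : H →L[ℂ] H := Pcl A with hPdef
  set s : H →L[ℂ] H := P * S₀ * P with hsdef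
  -- pointwise facts
  have hBker : ∀ x, A x = 0 → A (B x) = 0 := by
    intro x hx
    have hTx := ker_pres A T hA hT x hx
    have : B x = lam0 • x - T x := by simp [hBdef, ContinuousLinearMap.sub_apply,
      ContinuousLinearMap.smul_apply, ContinuousLinearMap.one_apply]
    rw [this, map_sub, map_smul, hx, hTx, smul_zero, sub_zero]
  have hs_apply : ∀ x, s x = P (S₀ (P x)) := by
    intro x; simp [hsdef, ContinuousLinearMap.mul_apply]
  have hsker : ∀ x, A x = 0 → s x = 0 := by
    intro x hx
    rw [hs_apply, P_ker A hA x hx, map_zero, map_zero]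
  have hskerA : ∀ x, A x = 0 → A (s x) = 0 := by
    intro x hx; rw [hsker x hx, map_zero]
  have hsb : ∀ ξ, anorm A (s ξ) ≤ c * anorm A ξ := by
    intro ξ
    rw [hs_apply, anorm_P A hA]
    calc anorm A (S₀ (P ξ)) ≤ c * anorm A (P ξ) := hcb _
      _ = c * anorm A ξ := by rw [anorm_P A hA]
  -- key operator identities
  have key1 : A * (B * s) = A := by
    ext x
    have e1 : A (B (P (S₀ (P x)))) = A (B (S₀ (P x))) := by
      have hker : A (P (S₀ (P x)) - S₀ (P x)) = 0 := by
        rw [map_sub, A_P A hA, sub_self]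
      have := hBker _ hker
      simp only [map_sub, sub_eq_zero] at this
      exact this
    have e2 : A (B (S₀ (P x))) = A (P x) := by
      have := congrFun (congrArg DFunLike.coe h1) (P x)
      simpa [ContinuousLinearMap.comp_apply] using this
    simp only [ContinuousLinearMap.mul_apply, ContinuousLinearMap.comp_apply]
    rw [hs_apply, e1, e2, A_P A hA]
  have key2 : s * B = P := by
    ext x
    have e1 : P (S₀ (P (B x))) = P (S₀ (B x)) := by
      have hker : A (P (B x) - B x) = 0 := by rw [map_sub, A_P A hA, sub_self]
      have hker2 : A (S₀ (P (B x)) - S₀ (B x)) = 0 := by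
        rw [← map_sub]
        exact ker_pres A S₀ hA ⟨c, hc, hcb⟩ _ hker
      have := P_ker A hA _ hker2
      rw [map_sub, sub_eq_zero] at this
      exact this
    have e2 : P (S₀ (B x)) = P x := by
      have h2x := congrFun (congrArg DFunLike.coe h2) x
      simp only [ContinuousLinearMap.comp_apply] at h2x
      have hker : A (S₀ (B x) - x) = 0 := by rw [map_sub, h2x, sub_self]
      have := P_ker A hA _ hker
      rw [map_sub, sub_eq_zero] at this
      exact this
    simp only [ContinuousLinearMap.mul_apply]
    rw [hs_apply, e1, e2]
  have keyK1 : ∀ n : ℕ, A * B * s ^ (n + 1) = A * s ^ n := by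
    intro n
    calc A * B * s ^ (n + 1) = A * B * (s * s ^ n) := by rw [← pow_succ']
      _ = (A * (B * s)) * s ^ n := by noncomm_ring
      _ = A * s ^ n := by rw [key1]
  have hsnP : ∀ n : ℕ, A * (s ^ n * P) = A * s ^ n := by
    intro n
    ext x
    simp only [ContinuousLinearMap.mul_apply]
    have hker : A (P x - x) = 0 := by rw [map_sub, A_P A hA, sub_self]
    have := ker_pres_pow A s hskerA n _ hker
    simp only [map_sub, sub_eq_zero] at this
    exact this
  have keyK2 : ∀ n : ℕ, A * (s ^ (n + 1) * B) = A * s ^ n := by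
    intro n
    calc A * (s ^ (n + 1) * B) = A * (s ^ n * (s * B)) := by
          rw [pow_succ, mul_assoc (s ^ n) s B]
      _ = A * (s ^ n * P) := by rw [key2]
      _ = A * s ^ n := hsnP n
  -- choose epsilon
  refine ⟨min (1 / (2 * (‖s‖ + 1))) (1 / (2 * (c + 1))), by positivity, ?_⟩
  intro lam hlam
  set μ : ℂ := lam0 - lam with hμdef
  have hμnorm : ‖μ‖ < min (1 / (2 * (‖s‖ + 1))) (1 / (2 * (c + 1))) := by
    rw [hμdef, norm_sub_rev]; exact hlam
  have hq1 : ‖μ‖ * ‖s‖ < 1 := by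
    have h1' := (lt_div_iff₀ (by positivity : (0:ℝ) < 2 * (‖s‖ + 1))).1
      (lt_of_lt_of_le hμnorm (min_le_left _ _))
    nlinarith [norm_nonneg s, norm_nonneg μ]
  have hq2 : ‖μ‖ * c < 1 := by
    have h1' := (lt_div_iff₀ (by positivity : (0:ℝ) < 2 * (c + 1))).1
      (lt_of_lt_of_le hμnorm (min_le_right _ _))
    nlinarith [norm_nonneg μ]
  have hq1n : 0 ≤ ‖μ‖ * ‖s‖ := by positivity
  have hq2n : 0 ≤ ‖μ‖ * c := by positivity
  -- the Neumann-type series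
  set f : ℕ → H →L[ℂ] H := fun n => μ ^ n • s ^ (n + 1) with hfdef
  have hfnorm : ∀ n, ‖f n‖ ≤ ‖s‖ * (‖μ‖ * ‖s‖) ^ n := by
    intro n
    rw [hfdef]
    calc ‖μ ^ n • s ^ (n + 1)‖ = ‖μ‖ ^ n * ‖s ^ (n + 1)‖ := by
          rw [norm_smul, norm_pow]
      _ ≤ ‖μ‖ ^ n * ‖s‖ ^ (n + 1) := by
          exact mul_le_mul_of_nonneg_left (norm_pow_le' _ (Nat.succ_pos n))
            (pow_nonneg (norm_nonneg _) _)
      _ = ‖s‖ * (‖μ‖ * ‖s‖) ^ n := by rw [mul_pow]; ring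
  have hfsum : Summable f :=
    Summable.of_norm_bounded ((summable_geometric_of_lt_one hq1n hq1).mul_left ‖s‖) hfnorm
  set r : H →L[ℂ] H := ∑' n, f n with hrdef
  -- the u sequence and telescoping
  set u : ℕ → H →L[ℂ] H := fun n => μ ^ n • (A * s ^ n) with hudef
  have hunorm : ∀ n, ‖u n‖ ≤ ‖A‖ * (‖μ‖ * ‖s‖) ^ n := by
    intro n
    rw [hudef]
    calc ‖μ ^ n • (A * s ^ n)‖ = ‖μ‖ ^ n * ‖A * s ^ n‖ := by rw [norm_smul, norm_pow]
      _ ≤ ‖μ‖ ^ n * (‖A‖ * ‖s‖ ^ n) := by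
          refine mul_le_mul_of_nonneg_left ?_ (pow_nonneg (norm_nonneg _) _)
          exact le_trans (norm_mul_le _ _)
            (mul_le_mul_of_nonneg_left (opnorm_pow_le s n) (norm_nonneg _))
      _ = ‖A‖ * (‖μ‖ * ‖s‖) ^ n := by rw [mul_pow]; ring
  have husum : Summable u :=
    Summable.of_norm_bounded ((summable_geometric_of_lt_one hq1n hq1).mul_left ‖A‖) hunorm
  have husum' : Summable (fun n => u (n + 1)) := (summable_nat_add_iff 1).2 husum
  have hu0 : Tendsto u atTop (nhds 0) := by
    have hg : Tendsto (fun n : ℕ => ‖A‖ * (‖μ‖ * ‖s‖) ^ n) atTop (nhds 0) := by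
      simpa using (tendsto_pow_atTop_nhds_zero_of_lt_one hq1n hq1).const_mul ‖A‖
    exact squeeze_zero_norm hunorm hg
  have hutel : ∑' n, (u n - u (n + 1)) = u 0 :=
    tsum_telescope_op u hu0 (husum.sub husum')
  have hu0val : u 0 = A := by
    rw [hudef]; simp only [pow_zero, one_smul, mul_one]
  -- identity computations
  have hBlam : lam • (1 : H →L[ℂ] H) - T = B - μ • 1 := by
    rw [hBdef, hμdef, sub_smul]; abel
  have hABr : A * B * r = ∑' n, u n := by
    rw [hrdef, ← (hfsum.tsum_mul_left (A * B))]
    refine tsum_congr (fun n => ?_)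
    simp only [hfdef, hudef]
    rw [mul_smul_comm, keyK1 n]
  have hAr : (μ • A) * r = ∑' n, u (n + 1) := by
    rw [hrdef, ← (hfsum.tsum_mul_left (μ • A))]
    refine tsum_congr (fun n => ?_)
    simp only [hfdef, hudef]
    rw [smul_mul_assoc, mul_smul_comm, smul_smul, ← pow_succ']
  have hI : A * ((lam • (1 : H →L[ℂ] H) - T) * r) = A := by
    rw [hBlam, sub_mul, mul_sub]
    have e1 : A * (B * r) = ∑' n, u n := by rw [← mul_assoc]; exact hABr
    have e2 : A * ((μ • 1) * r) = ∑' n, u (n + 1) := by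
      rw [smul_mul_assoc, one_mul, mul_smul_comm, ← smul_mul_assoc]
      exact hAr
    rw [e1, e2, ← Summable.tsum_sub husum husum', hutel, hu0val]
  have hII : A * (r * (lam • (1 : H →L[ℂ] H) - T)) = A := by
    rw [hBlam, mul_sub r, mul_sub A]
    have e1 : A * (r * B) = ∑' n, u n := by
      have hfB : Summable (fun n => f n * B) := hfsum.mul_right B
      rw [hrdef, ← (hfsum.tsum_mul_right B), ← (hfB.tsum_mul_left A)]
      refine tsum_congr (fun n => ?_)
      simp only [hfdef, hudef]
      rw [smul_mul_assoc, mul_smul_comm, keyK2 n]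
    have e2 : A * (r * (μ • 1)) = ∑' n, u (n + 1) := by
      rw [mul_smul_comm μ r 1, mul_one, mul_smul_comm, ← smul_mul_assoc]
      exact hAr
    rw [e1, e2, ← Summable.tsum_sub husum husum', hutel, hu0val]
  -- r is nonzero
  have hrne : r ≠ 0 := by
    intro h
    have := hI
    rw [h, mul_zero, mul_zero] at this
    exact hA0 this.symm
  -- r is A-bounded
  set g : ℕ → ℝ := fun n => c ^ (n + 1) * ‖μ‖ ^ n with hgdef
  have hgsum : Summable g := by
    apply Summable.congr ((summable_geometric_of_lt_one hq2n hq2).mul_left c)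
    intro n
    rw [hgdef]
    show c * (‖μ‖ * c) ^ n = c ^ (n + 1) * ‖μ‖ ^ n
    rw [mul_pow]; ring
  have hbnd : ∀ n ξ, anorm A ((f n) ξ) ≤ g n * anorm A ξ := by
    intro n ξ
    rw [hfdef]
    show anorm A ((μ ^ n • s ^ (n + 1)) ξ) ≤ g n * anorm A ξ
    rw [ContinuousLinearMap.smul_apply, anorm_smul A hA, norm_pow]
    calc ‖μ‖ ^ n * anorm A ((s ^ (n + 1)) ξ)
        ≤ ‖μ‖ ^ n * (c ^ (n + 1) * anorm A ξ) :=
          mul_le_mul_of_nonneg_left (abound_pow A s c hc.le hsb (n + 1) ξ)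
            (pow_nonneg (norm_nonneg μ) n)
      _ = g n * anorm A ξ := by rw [hgdef]; ring
  have hrb := abound_tsum A hA f g hfsum hgsum hbnd
  have hgnn : 0 ≤ ∑' n, g n := tsum_nonneg (fun n => by positivity)
  have hrmem : MemBAhalf A r := by
    refine ⟨∑' n, g n + 1, by linarith, fun ξ => ?_⟩
    have h1 := hrb ξ
    nlinarith [anorm_nonneg A ξ]
  exact ⟨r, hrne, hrmem, hI, hII⟩

lemma resolvent_large (A T : H →L[ℂ] H) (hA : A.IsPositive) (hA0 : A ≠ 0)
    (hT : MemBAhalf A T) :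
    ∃ M : ℝ, 0 ≤ M ∧ ∀ lam : ℂ, M < ‖lam‖ →
      AInvertibleHalf A (lam • (1 : H →L[ℂ] H) - T) := by
  classical
  obtain ⟨d, hd, hdb⟩ := hT
  refine ⟨max ‖T‖ d, le_trans (norm_nonneg T) (le_max_left _ _), ?_⟩
  intro lam hlam
  have hT0 : ‖T‖ < ‖lam‖ := lt_of_le_of_lt (le_max_left _ _) hlam
  have hd0 : d < ‖lam‖ := lt_of_le_of_lt (le_max_right _ _) hlam
  have hlam0 : (0:ℝ) < ‖lam‖ := lt_of_le_of_lt (norm_nonneg T) hT0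
  have hlamne : lam ≠ 0 := by
    intro h; rw [h, norm_zero] at hlam0; exact lt_irrefl _ hlam0
  have hinv : ‖lam⁻¹‖ = ‖lam‖⁻¹ := norm_inv lam
  -- geometric ratios
  have hq1 : ‖lam⁻¹‖ * ‖T‖ < 1 := by
    rw [hinv]
    rw [inv_mul_lt_iff₀ hlam0, mul_one]
    exact hT0
  have hq2 : ‖lam⁻¹‖ * d < 1 := by
    rw [hinv, inv_mul_lt_iff₀ hlam0, mul_one]
    exact hd0
  have hq1n : 0 ≤ ‖lam⁻¹‖ * ‖T‖ := by positivity
  have hq2n : 0 ≤ ‖lam⁻¹‖ * d := by positivity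
  set f : ℕ → H →L[ℂ] H := fun n => (lam⁻¹) ^ (n + 1) • T ^ n with hfdef
  have hfnorm : ∀ n, ‖f n‖ ≤ ‖lam⁻¹‖ * (‖lam⁻¹‖ * ‖T‖) ^ n := by
    intro n
    simp only [hfdef]
    rw [norm_smul, norm_pow]
    calc ‖lam⁻¹‖ ^ (n + 1) * ‖T ^ n‖ ≤ ‖lam⁻¹‖ ^ (n + 1) * ‖T‖ ^ n :=
          mul_le_mul_of_nonneg_left (opnorm_pow_le T n) (pow_nonneg (norm_nonneg _) _)
      _ = ‖lam⁻¹‖ * (‖lam⁻¹‖ * ‖T‖) ^ n := by rw [mul_pow, pow_succ]; ring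
  have hfsum : Summable f :=
    Summable.of_norm_bounded
      ((summable_geometric_of_lt_one hq1n hq1).mul_left ‖lam⁻¹‖) hfnorm
  set r : H →L[ℂ] H := ∑' n, f n with hrdef
  set u : ℕ → H →L[ℂ] H := fun n => (lam⁻¹) ^ n • T ^ n with hudef
  have hunorm : ∀ n, ‖u n‖ ≤ (‖lam⁻¹‖ * ‖T‖) ^ n := by
    intro n
    simp only [hudef]
    rw [norm_smul, norm_pow, mul_pow]
    exact mul_le_mul_of_nonneg_left (opnorm_pow_le T n) (pow_nonneg (norm_nonneg _) _)
  have husum : Summable u :=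
    Summable.of_norm_bounded (summable_geometric_of_lt_one hq1n hq1) hunorm
  have husum' : Summable (fun n => u (n + 1)) := (summable_nat_add_iff 1).2 husum
  have hu0 : Tendsto u atTop (nhds 0) := by
    have hg : Tendsto (fun n : ℕ => (‖lam⁻¹‖ * ‖T‖) ^ n) atTop (nhds 0) :=
      tendsto_pow_atTop_nhds_zero_of_lt_one hq1n hq1
    exact squeeze_zero_norm hunorm hg
  have hutel : ∑' n, (u n - u (n + 1)) = u 0 :=
    tsum_telescope_op u hu0 (husum.sub husum')
  have hu0val : u 0 = 1 := by simp only [hudef, pow_zero, one_smul]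
  have hsc : ∀ n : ℕ, lam * lam⁻¹ ^ (n + 1) = lam⁻¹ ^ n := by
    intro n
    rw [pow_succ]
    field_simp
  have hterm1 : ∀ n, (lam • (1 : H →L[ℂ] H) - T) * f n = u n - u (n + 1) := by
    intro n
    simp only [hfdef, hudef]
    have e1 : (lam • (1 : H →L[ℂ] H)) * (lam⁻¹ ^ (n + 1) • T ^ n)
        = lam⁻¹ ^ n • T ^ n := by
      rw [smul_mul_assoc, one_mul, smul_smul, hsc n]
    have e2 : T * (lam⁻¹ ^ (n + 1) • T ^ n) = lam⁻¹ ^ (n + 1) • T ^ (n + 1) := by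
      rw [mul_smul_comm, ← pow_succ']
    rw [sub_mul, e1, e2]
  have hterm2 : ∀ n, f n * (lam • (1 : H →L[ℂ] H) - T) = u n - u (n + 1) := by
    intro n
    simp only [hfdef, hudef]
    have e1 : (lam⁻¹ ^ (n + 1) • T ^ n) * (lam • (1 : H →L[ℂ] H))
        = lam⁻¹ ^ n • T ^ n := by
      rw [smul_mul_assoc, mul_smul_comm, mul_one, smul_smul, mul_comm, hsc n]
    have e2 : (lam⁻¹ ^ (n + 1) • T ^ n) * T = lam⁻¹ ^ (n + 1) • T ^ (n + 1) := by
      rw [smul_mul_assoc, ← pow_succ]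
    rw [mul_sub, e1, e2]
  have hBr : (lam • (1 : H →L[ℂ] H) - T) * r = 1 := by
    rw [hrdef, ← (hfsum.tsum_mul_left (lam • (1 : H →L[ℂ] H) - T)),
      tsum_congr hterm1, hutel, hu0val]
  have hrB : r * (lam • (1 : H →L[ℂ] H) - T) = 1 := by
    rw [hrdef, ← (hfsum.tsum_mul_right (lam • (1 : H →L[ℂ] H) - T)),
      tsum_congr hterm2, hutel, hu0val]
  have hI : A * ((lam • (1 : H →L[ℂ] H) - T) * r) = A := by rw [hBr, mul_one]
  have hII : A * (r * (lam • (1 : H →L[ℂ] H) - T)) = A := by rw [hrB, mul_one]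
  have hrne : r ≠ 0 := by
    intro h
    have h1 : (1 : H →L[ℂ] H) = 0 := by rw [← hBr, h, mul_zero]
    have h2 : A = 0 := by rw [← mul_one A, h1, mul_zero]
    exact hA0 h2
  set g : ℕ → ℝ := fun n => ‖lam⁻¹‖ ^ (n + 1) * d ^ n with hgdef
  have hgsum : Summable g := by
    apply Summable.congr ((summable_geometric_of_lt_one hq2n hq2).mul_left ‖lam⁻¹‖)
    intro n
    simp only [hgdef]
    rw [mul_pow, pow_succ]
    ring
  have hbnd : ∀ n ξ, anorm A ((f n) ξ) ≤ g n * anorm A ξ := by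
    intro n ξ
    simp only [hfdef, hgdef]
    rw [ContinuousLinearMap.smul_apply, anorm_smul A hA, norm_pow]
    calc ‖lam⁻¹‖ ^ (n + 1) * anorm A ((T ^ n) ξ)
        ≤ ‖lam⁻¹‖ ^ (n + 1) * (d ^ n * anorm A ξ) :=
          mul_le_mul_of_nonneg_left (abound_pow A T d hd.le hdb n ξ)
            (pow_nonneg (norm_nonneg _) _)
      _ = ‖lam⁻¹‖ ^ (n + 1) * d ^ n * anorm A ξ := by ring
  have hrb := abound_tsum A hA f g hfsum hgsum hbnd
  have hgnn : 0 ≤ ∑' n, g n := tsum_nonneg (fun n => by positivity)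
  have hrmem : MemBAhalf A r := by
    refine ⟨∑' n, g n + 1, by linarith, fun ξ => ?_⟩
    have h1 := hrb ξ
    nlinarith [anorm_nonneg A ξ]
  exact ⟨r, hrne, hrmem, hI, hII⟩

lemma sigmaA_isCompact (A T : H →L[ℂ] H) (hA : A.IsPositive) (hA0 : A ≠ 0)
    (hT : MemBAhalf A T) : IsCompact (sigmaA A T) := by
  obtain ⟨M, hM0, hM⟩ := resolvent_large A T hA hA0 hT
  have hclosed : IsClosed (sigmaA A T) := by
    rw [← isOpen_compl_iff]
    rw [Metric.isOpen_iff]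
    intro lam0 hlam0
    have h : AInvertibleHalf A (lam0 • (1 : H →L[ℂ] H) - T) := not_not.1 hlam0
    obtain ⟨ε, hε, hball⟩ := resolvent_open A T hA hA0 hT lam0 h
    refine ⟨ε, hε, fun lam hlam => ?_⟩
    rw [Metric.mem_ball, Complex.dist_eq] at hlam
    exact not_not.2 (hball lam hlam)
  have hbdd : sigmaA A T ⊆ Metric.closedBall 0 M := by
    intro lam hlam
    rw [Metric.mem_closedBall, Complex.dist_eq, sub_zero]
    by_contra hc
    push_neg at hc
    exact hlam (hM lam hc)
  exact (Metric.isCompact_of_isClosed_isBounded hclosed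
    (Bornology.IsBounded.subset (Metric.isBounded_closedBall) hbdd))

lemma anorm_rev_triangle (A T : H →L[ℂ] H) (hA : A.IsPositive) (lam mu : ℂ) (x : H) :
    anorm A (T x - lam • x) - ‖lam - mu‖ * anorm A x ≤ anorm A (T x - mu • x) := by
  have hdecomp : T x - lam • x = (T x - mu • x) + (mu - lam) • x := by
    rw [sub_smul]; abel
  have h1 : anorm A (T x - lam • x) ≤ anorm A (T x - mu • x) + ‖lam - mu‖ * anorm A x := by
    rw [hdecomp, anorm_eq A hA, anorm_eq A hA, anorm_eq A hA, map_add]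
    calc ‖Rop A (T x - mu • x) + Rop A ((mu - lam) • x)‖
        ≤ ‖Rop A (T x - mu • x)‖ + ‖Rop A ((mu - lam) • x)‖ := norm_add_le _ _
      _ = ‖Rop A (T x - mu • x)‖ + ‖lam - mu‖ * ‖Rop A x‖ := by
          rw [map_smul, norm_smul, norm_sub_rev]
  linarith

lemma sigmaAapp_isCompact (A T : H →L[ℂ] H) (hA : A.IsPositive) (hA0 : A ≠ 0)
    (hT : MemBAhalf A T) : IsCompact (sigmaAapp A T) := by
  obtain ⟨d, hd, hdb⟩ := hT
  have hclosed : IsClosed (sigmaAapp A T) := by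
    rw [← isOpen_compl_iff, Metric.isOpen_iff]
    intro lam hlam
    set ms : Set ℝ := {r | ∃ x : H, anorm A x = 1 ∧ r = anorm A (T x - lam • x)}
      with hmsdef
    have hne : ms.Nonempty := by
      obtain ⟨x, hx⟩ := exists_unit_anorm A hA hA0
      exact ⟨anorm A (T x - lam • x), x, hx, rfl⟩
    have hbdd : BddBelow ms := by
      refine ⟨0, fun r hr => ?_⟩
      obtain ⟨x, _, rfl⟩ := hr
      exact anorm_nonneg A _
    set δ : ℝ := sInf ms with hδdef
    have hδ0 : 0 ≤ δ := le_csInf hne (fun r hr => by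
      obtain ⟨x, _, rfl⟩ := hr; exact anorm_nonneg A _)
    have hδpos : 0 < δ := by
      rcases lt_or_eq_of_le hδ0 with h | h
      · exact h
      · exfalso
        apply hlam
        have hseq : ∀ n : ℕ, ∃ x : H, anorm A x = 1 ∧
            anorm A (T x - lam • x) < 1 / (n + 1) := by
          intro n
          have hlt : sInf ms < 1 / (n + 1) := by
            rw [← hδdef, ← h]
            positivity
          obtain ⟨r, hr, hrlt⟩ := exists_lt_of_csInf_lt hne hlt
          obtain ⟨x, hx1, rfl⟩ := hr
          exact ⟨x, hx1, hrlt⟩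
        choose x hx1 hx2 using hseq
        refine ⟨x, hx1, ?_⟩
        have hpos : ∀ n : ℕ, 0 ≤ anorm A (T (x n) - lam • x n) :=
          fun n => anorm_nonneg A _
        apply squeeze_zero hpos (fun n => (hx2 n).le)
        exact tendsto_one_div_add_atTop_nhds_zero_nat
    refine ⟨δ / 2, by linarith, fun mu hmu => ?_⟩
    rw [Metric.mem_ball, Complex.dist_eq, norm_sub_rev] at hmu
    intro hmuapp
    obtain ⟨x, hx1, hx2⟩ := hmuapp
    have hlb : ∀ n, δ / 2 ≤ anorm A (T (x n) - mu • x n) := by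
      intro n
      have h1 : anorm A (T (x n) - lam • x n) ∈ ms := ⟨x n, hx1 n, rfl⟩
      have h2 : δ ≤ anorm A (T (x n) - lam • x n) := csInf_le hbdd h1
      have h3 := anorm_rev_triangle A T hA lam mu (x n)
      rw [hx1 n] at h3
      linarith
    have := hx2.eventually (gt_mem_nhds (show (0:ℝ) < δ / 2 by linarith))
    obtain ⟨n, hn⟩ := this.exists
    exact absurd (hlb n) (not_le.2 hn)
  have hbdd : sigmaAapp A T ⊆ Metric.closedBall 0 d := by
    intro lam hlam
    rw [Metric.mem_closedBall, Complex.dist_eq, sub_zero]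
    by_contra hc
    push_neg at hc
    obtain ⟨x, hx1, hx2⟩ := hlam
    have hlb : ∀ n, ‖lam‖ - d ≤ anorm A (T (x n) - lam • x n) := by
      intro n
      have h1 : anorm A (lam • x n) - anorm A (T (x n))
          ≤ anorm A (T (x n) - lam • x n) := by
        rw [anorm_eq A hA, anorm_eq A hA, anorm_eq A hA, map_sub]
        have := norm_sub_norm_le (Rop A (T (x n))) (Rop A (lam • x n))
        have h2 := abs_norm_sub_norm_le (Rop A (T (x n))) (Rop A (lam • x n))
        have h3 := abs_le.1 h2
        linarith [h3.1]
      have h4 : anorm A (lam • x n) = ‖lam‖ := by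
        rw [anorm_smul A hA, hx1 n, mul_one]
      have h5 : anorm A (T (x n)) ≤ d := by
        have := hdb (x n); rw [hx1 n, mul_one] at this; exact this
      linarith
    have := hx2.eventually (gt_mem_nhds (show (0:ℝ) < ‖lam‖ - d by linarith))
    obtain ⟨n, hn⟩ := this.exists
    exact absurd (hlb n) (not_le.2 hn)
  exact Metric.isCompact_of_isClosed_isBounded hclosed
    (Bornology.IsBounded.subset (Metric.isBounded_closedBall) hbdd)

/-- for `T ∈ B_{A^{1/2}}(H)`, both `σ_A(T)` and `σ_{A,app}(T)` are compact. -/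
theorem stmt9 (A T : H →L[ℂ] H) (hA : A.IsPositive) (hA0 : A ≠ 0)
    (hT : MemBAhalf A T) :
    IsCompact (sigmaA A T) ∧ IsCompact (sigmaAapp A T) :=
  ⟨sigmaA_isCompact A T hA hA0 hT, sigmaAapp_isCompact A T hA hA0 hT⟩
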